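/- Let n ≥ 1, let ψ be a smooth function on ℝⁿ supported in the unit ball, let N ≥ 1, and define K_ℝ(x,t) := ∫_{ℝⁿ} ψ(N⁻¹ξ) e^{2πi(x·ξ + t|ξ|²)} dξ. Let Q₀ ⊂ ℝⁿ be the cube of side length 1 centered at the origin. Then there is a constant C = C(n) (independent of N, ψ, x, t) such that for all x ∈ ℝⁿ and t ∈ ℝ, |K_ℝ(x,t)| ≤ C · sup_{α∈Q₀} |∑_{k∈ℤⁿ} ψ(N⁻¹(α+k)) e^{2πi((x+2tα)·k + t|k|²)}|. -/

import Mathlib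

open MeasureTheory Complex Set
open scoped ENNReal Real

noncomputable section

/-- Euclidean dot product on `ℝᵏ`. -/
def rdot {k : ℕ} (a b : Fin k → ℝ) : ℝ := ∑ i, a i * b i

/-- Pairing of an integer frequency with a point. -/
def zdot {k : ℕ} (m : Fin k → ℤ) (y : Fin k → ℝ) : ℝ := ∑ i, (m i : ℝ) * y i

/-- Squared Euclidean norm. -/
def rsq {k : ℕ} (a : Fin k → ℝ) : ℝ := ∑ i, a i ^ 2

/-- Squared Euclidean norm of an integer vector. -/
def zsq {k : ℕ} (m : Fin k → ℤ) : ℝ := ∑ i, ((m i : ℝ)) ^ 2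

/-- The character `e(r) = exp(2πir)`. -/
def e2 (r : ℝ) : ℂ := Complex.exp (2 * Real.pi * Complex.I * r)

/-- Fundamental domain `[0,1]^d` for the torus `𝕋ᵈ = ℝᵈ/ℤᵈ`. -/
def tcube (d : ℕ) : Set (Fin d → ℝ) := Set.univ.pi fun _ => Set.Icc (0:ℝ) 1

/-- `m`-th Fourier coefficient in the periodic variable. -/
def fcoef {n d : ℕ} (f : (Fin n → ℝ) → (Fin d → ℝ) → ℂ) (m : Fin d → ℤ) (x : Fin n → ℝ) : ℂ :=
  ∫ y in tcube d, f x y * e2 (-(zdot m y))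

/-- `f̂ₘ(ξ)`, the Fourier transform in `x` of the `m`-th Fourier coefficient. -/
def fhat {n d : ℕ} (f : (Fin n → ℝ) → (Fin d → ℝ) → ℂ) (m : Fin d → ℤ) (ξ : Fin n → ℝ) : ℂ :=
  ∫ x, fcoef f m x * e2 (-(rdot x ξ))

/-- Schrödinger evolution `e^{itΔ}f` on `ℝⁿ × 𝕋ᵈ`. -/
def sevol {n d : ℕ} (f : (Fin n → ℝ) → (Fin d → ℝ) → ℂ) (t : ℝ)
    (x : Fin n → ℝ) (y : Fin d → ℝ) : ℂ :=
  ∑' m : Fin d → ℤ, ∫ ξ, fhat f m ξ * e2 (rdot x ξ + zdot m y + t * (rsq ξ + zsq m))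

/-- Space-time `L^p` norm over `ℝⁿ × 𝕋ᵈ × I`. -/
def stLp {n d : ℕ} (p : ℝ) (F : ℝ → (Fin n → ℝ) → (Fin d → ℝ) → ℂ) (I : Set ℝ) : ℝ≥0∞ :=
  (∫⁻ t in I, ∫⁻ y in tcube d, ∫⁻ x, (‖F t x y‖₊ : ℝ≥0∞) ^ p) ^ (1 / p)

/-- `L²` norm on `ℝⁿ × 𝕋ᵈ`. -/
def l2norm {n d : ℕ} (f : (Fin n → ℝ) → (Fin d → ℝ) → ℂ) : ℝ≥0∞ :=
  (∫⁻ y in tcube d, ∫⁻ x, (‖f x y‖₊ : ℝ≥0∞) ^ (2:ℝ)) ^ (1/2 : ℝ)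

/-- Sobolev `H^s` norm on `ℝⁿ × 𝕋ᵈ`. -/
def hsnorm {n d : ℕ} (s : ℝ) (f : (Fin n → ℝ) → (Fin d → ℝ) → ℂ) : ℝ≥0∞ :=
  (∑' m : Fin d → ℤ, ∫⁻ ξ,
      ENNReal.ofReal ((1 + rsq ξ + zsq m) ^ s) * (‖fhat f m ξ‖₊ : ℝ≥0∞) ^ (2:ℝ)) ^ (1/2 : ℝ)

/-- Smooth on `ℝⁿ × 𝕋ᵈ` (i.e. smooth and `ℤᵈ`-periodic in the second variable) and rapidly
decaying in `x` together with all derivatives. -/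
def SmoothDecaying {n d : ℕ} (f : (Fin n → ℝ) → (Fin d → ℝ) → ℂ) : Prop :=
  ContDiff ℝ (⊤ : ℕ∞) (fun p : (Fin n → ℝ) × (Fin d → ℝ) => f p.1 p.2) ∧
  (∀ (x : Fin n → ℝ) (y : Fin d → ℝ) (k : Fin d → ℤ),
      f x (fun i => y i + (k i : ℝ)) = f x y) ∧
  (∀ (K i : ℕ), ∃ C : ℝ, ∀ (x : Fin n → ℝ) (y : Fin d → ℝ),
      ‖x‖ ^ K *
        ‖iteratedFDeriv ℝ i (fun p : (Fin n → ℝ) × (Fin d → ℝ) => f p.1 p.2) (x, y)‖ ≤ C)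

/-- A smooth bump function: values in `[0,1]`, `≡ 1` on the unit ball, supported in `B(0,2)`. -/
def IsBump {k : ℕ} (φ : (Fin k → ℝ) → ℝ) : Prop :=
  ContDiff ℝ (⊤ : ℕ∞) φ ∧ (∀ v, φ v ∈ Set.Icc (0:ℝ) 1) ∧
  (∀ v, rsq v ≤ 1 → φ v = 1) ∧ (∀ v, 4 ≤ rsq v → φ v = 0)

/-- `x` is a dyadic integer `2^k ≥ 1`. -/
def DyadicR (x : ℝ) : Prop := ∃ k : ℕ, x = 2 ^ k

/-- Evolution `e^{itΔ}P_{≤N}f` of the Littlewood–Paley truncation of `f`. -/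
def sevolP {n d : ℕ} (φ : (Fin (n+d) → ℝ) → ℝ) (N : ℝ)
    (f : (Fin n → ℝ) → (Fin d → ℝ) → ℂ) (t : ℝ) (x : Fin n → ℝ) (y : Fin d → ℝ) : ℂ :=
  ∑' m : Fin d → ℤ, ∫ ξ,
    (φ (N⁻¹ • (Fin.append ξ (fun i => (m i : ℝ)))) : ℂ) * fhat f m ξ *
      e2 (rdot x ξ + zdot m y + t * (rsq ξ + zsq m))

/-- Evolution `e^{itΔ}P_{≤N}P^x_{≤M}f`. -/
def sevolPx {n d : ℕ} (φ : (Fin (n+d) → ℝ) → ℝ) (φ₀ : (Fin n → ℝ) → ℝ) (N M : ℝ)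
    (f : (Fin n → ℝ) → (Fin d → ℝ) → ℂ) (t : ℝ) (x : Fin n → ℝ) (y : Fin d → ℝ) : ℂ :=
  ∑' m : Fin d → ℤ, ∫ ξ,
    (φ (N⁻¹ • (Fin.append ξ (fun i => (m i : ℝ)))) : ℂ) * (φ₀ (M⁻¹ • ξ) : ℂ) * fhat f m ξ *
      e2 (rdot x ξ + zdot m y + t * (rsq ξ + zsq m))

/-- Fourier transform on `ℝⁿ`. -/
def fhatR {n : ℕ} (g : (Fin n → ℝ) → ℂ) (ξ : Fin n → ℝ) : ℂ :=
  ∫ x, g x * e2 (-(rdot x ξ))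

/-- Smooth and rapidly decaying (together with all derivatives) on `ℝⁿ`. -/
def SmoothDecayingR {n : ℕ} (g : (Fin n → ℝ) → ℂ) : Prop :=
  ContDiff ℝ (⊤ : ℕ∞) g ∧
  ∀ (K i : ℕ), ∃ C : ℝ, ∀ x, ‖x‖ ^ K * ‖iteratedFDeriv ℝ i g x‖ ≤ C

/-- Space-time convolution on `ℝⁿ × 𝕋ᵈ × ℝ`. -/
def stConv {n d : ℕ} (K h : (Fin n → ℝ) → (Fin d → ℝ) → ℝ → ℂ)
    (x : Fin n → ℝ) (y : Fin d → ℝ) (t : ℝ) : ℂ :=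
  ∫ t' : ℝ, ∫ y' in tcube d, ∫ x', K (x - x') (y - y') (t - t') * h x' y' t'

/-- Smooth on `ℝⁿ × 𝕋ᵈ × ℝ` and rapidly decaying in `(x,t)` together with all derivatives. -/
def SmoothDecaying3 {n d : ℕ} (h : (Fin n → ℝ) → (Fin d → ℝ) → ℝ → ℂ) : Prop :=
  ContDiff ℝ (⊤ : ℕ∞) (fun p : ((Fin n → ℝ) × (Fin d → ℝ)) × ℝ => h p.1.1 p.1.2 p.2) ∧
  (∀ (x : Fin n → ℝ) (y : Fin d → ℝ) (t : ℝ) (k : Fin d → ℤ),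
      h x (fun i => y i + (k i : ℝ)) t = h x y t) ∧
  (∀ (K i : ℕ), ∃ C : ℝ, ∀ (x : Fin n → ℝ) (y : Fin d → ℝ) (t : ℝ),
      (‖x‖ + |t|) ^ K *
        ‖iteratedFDeriv ℝ i
          (fun p : ((Fin n → ℝ) × (Fin d → ℝ)) × ℝ => h p.1.1 p.1.2 p.2) ((x, y), t)‖ ≤ C)

/-- `l`-th Fourier coefficient in the periodic variable of a space-time function. -/
def hcoef3 {n d : ℕ} (h : (Fin n → ℝ) → (Fin d → ℝ) → ℝ → ℂ) (l : Fin d → ℤ)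
    (x : Fin n → ℝ) (t : ℝ) : ℂ :=
  ∫ y in tcube d, h x y t * e2 (-(zdot l y))

lemma psi_vanish {n : ℕ} {ψ : (Fin n → ℝ) → ℂ} (hsupp : ∀ ξ, 1 < rsq ξ → ψ ξ = 0)
    {N : ℝ} (hN : 1 ≤ N) {v : Fin n → ℝ} {i : Fin n} (hi : N < |v i|) :
    ψ (N⁻¹ • v) = 0 := by
  have hN0 : (0:ℝ) < N := by linarith
  apply hsupp
  have h1 : ((N⁻¹ • v) i)^2 ≤ rsq (N⁻¹ • v) :=
    Finset.single_le_sum (f := fun j => ((N⁻¹ • v) j)^2) (fun j _ => sq_nonneg _)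
      (Finset.mem_univ i)
  have h2 : ((N⁻¹ • v) i) ^ 2 = (v i)^2 / N^2 := by
    simp only [Pi.smul_apply, smul_eq_mul]
    field_simp
  have h3 : N^2 < (v i)^2 := by
    nlinarith [_root_.sq_abs (v i), sq_nonneg (|v i| - N), abs_nonneg (v i)]
  have h4 : 1 < (v i)^2 / N^2 := (one_lt_div (by positivity)).2 h3
  linarith [h2 ▸ h1]

/-- The `k`-summand of the Weyl sum. -/
def fterm {n : ℕ} (ψ : (Fin n → ℝ) → ℂ) (N t : ℝ) (x : Fin n → ℝ) (k : Fin n → ℤ)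
    (α : Fin n → ℝ) : ℂ :=
  ψ (N⁻¹ • (fun i => α i + (k i : ℝ))) *
    e2 (rdot (fun i => x i + 2 * t * α i) (fun i => (k i : ℝ)) + t * zsq k)

lemma away {n : ℕ} {N : ℝ} (hN : 1 ≤ N) {k : Fin n → ℤ}
    (hk : k ∉ Fintype.piFinset fun _ : Fin n => Finset.Icc (-(⌈N⌉ + 1)) (⌈N⌉ + 1))
    {α : Fin n → ℝ} (hα : ∀ i, |α i| ≤ 1/2) : ∃ i, N < |α i + (k i : ℝ)| := by
  rw [Fintype.mem_piFinset] at hk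
  push_neg at hk
  obtain ⟨i, hi⟩ := hk
  rw [Finset.mem_Icc] at hi
  push_neg at hi
  have hceil1 : (1:ℤ) ≤ ⌈N⌉ := by
    rw [Int.one_le_ceil_iff]; linarith
  have h1 : (⌈N⌉:ℤ) + 2 ≤ |k i| := by
    rcases le_or_gt (-(⌈N⌉+1)) (k i) with hge | hlt
    · have h := hi hge
      rw [abs_of_pos (by omega)]; omega
    · rw [abs_of_neg (by omega)]; omega
  refine ⟨i, ?_⟩
  have h4 : (⌈N⌉:ℝ) + 2 ≤ |(k i:ℝ)| := by exact_mod_cast h1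
  have hc : N ≤ (⌈N⌉:ℝ) := Int.le_ceil N
  have h3 : |(k i:ℝ)| ≤ |α i + (k i:ℝ)| + |α i| := by
    calc |(k i:ℝ)| = |(α i + (k i:ℝ)) + (-(α i))| := by ring_nf
    _ ≤ |α i + (k i:ℝ)| + |(-(α i))| := abs_add_le _ _
    _ = |α i + (k i:ℝ)| + |α i| := by rw [abs_neg]
  have := hα i
  linarith

lemma fterm_zero {n : ℕ} {ψ : (Fin n → ℝ) → ℂ} (hsupp : ∀ ξ, 1 < rsq ξ → ψ ξ = 0)
    {N : ℝ} (hN : 1 ≤ N) (t : ℝ) (x : Fin n → ℝ) {k : Fin n → ℤ}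
    (hk : k ∉ Fintype.piFinset fun _ : Fin n => Finset.Icc (-(⌈N⌉ + 1)) (⌈N⌉ + 1))
    {α : Fin n → ℝ} (hα : ∀ i, |α i| ≤ 1/2) : fterm ψ N t x k α = 0 := by
  obtain ⟨i, hi⟩ := away hN hk hα
  unfold fterm
  rw [psi_vanish hsupp hN (v := fun i => α i + (k i:ℝ)) hi, zero_mul]

lemma e2_add (a b : ℝ) : e2 (a + b) = e2 a * e2 b := by
  unfold e2; rw [← Complex.exp_add]; push_cast; ring_nf

lemma norm_e2 (r : ℝ) : ‖e2 r‖ = 1 := by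
  unfold e2
  have h : 2 * Real.pi * Complex.I * r = ((2 * Real.pi * r : ℝ) : ℂ) * Complex.I := by
    push_cast; ring
  rw [h, Complex.norm_exp_ofReal_mul_I]

lemma continuous_e2 : Continuous e2 :=
  Complex.continuous_exp.comp (continuous_const.mul Complex.continuous_ofReal)

lemma key_exp {n : ℕ} (x α : Fin n → ℝ) (t : ℝ) (k : Fin n → ℤ) :
    rdot x (fun i => α i + (k i:ℝ)) + t * rsq (fun i => α i + (k i:ℝ)) =
      (rdot x α + t * rsq α) +
      (rdot (fun i => x i + 2 * t * α i) (fun i => (k i : ℝ)) + t * zsq k) := by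
  simp only [rdot, rsq, zsq, Finset.mul_sum, ← Finset.sum_add_distrib]
  exact Finset.sum_congr rfl fun i _ => by ring

lemma norm_fterm_le {n : ℕ} {ψ : (Fin n → ℝ) → ℂ} {M : ℝ} (hM : ∀ v, ‖ψ v‖ ≤ M)
    (N t : ℝ) (x : Fin n → ℝ) (k : Fin n → ℤ) (α : Fin n → ℝ) :
    ‖fterm ψ N t x k α‖ ≤ M := by
  unfold fterm; rw [norm_mul, norm_e2, mul_one]; exact hM _

lemma wsum_bound {n : ℕ} {ψ : (Fin n → ℝ) → ℂ} (hsupp : ∀ ξ, 1 < rsq ξ → ψ ξ = 0)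
    {N : ℝ} (hN : 1 ≤ N) (t : ℝ) (x : Fin n → ℝ) {M : ℝ} (hM : ∀ v, ‖ψ v‖ ≤ M)
    {α : Fin n → ℝ} (hα : ∀ i, |α i| ≤ 1/2) :
    ‖∑' k : Fin n → ℤ, fterm ψ N t x k α‖ ≤
      ((Fintype.piFinset fun _ : Fin n => Finset.Icc (-(⌈N⌉ + 1)) (⌈N⌉ + 1)).card : ℝ) * M := by
  set T := Fintype.piFinset fun _ : Fin n => Finset.Icc (-(⌈N⌉ + 1)) (⌈N⌉ + 1) with hT
  rw [tsum_eq_sum (s := T) (fun k hk => fterm_zero hsupp hN t x hk hα)]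
  calc ‖∑ k ∈ T, fterm ψ N t x k α‖ ≤ ∑ k ∈ T, ‖fterm ψ N t x k α‖ := norm_sum_le _ _
  _ ≤ ∑ _k ∈ T, M := Finset.sum_le_sum fun k _ => norm_fterm_le hM N t x k α
  _ = (T.card : ℝ) * M := by rw [Finset.sum_const, nsmul_eq_mul]


/-- Lemma 4.2, discretization of the Euclidean kernel: the free kernel
`K_ℝ(x,t)` is dominated by the supremum over `α` in the unit cube `Q₀` of the corresponding
discrete Weyl sums. -/
theorem statement10 (n : ℕ) (hn : 1 ≤ n) :
    ∃ C : ℝ, 0 < C ∧ ∀ ψ : (Fin n → ℝ) → ℂ, ContDiff ℝ (⊤ : ℕ∞) ψ →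
      (∀ ξ, 1 < rsq ξ → ψ ξ = 0) → ∀ N : ℝ, 1 ≤ N → ∀ (x : Fin n → ℝ) (t : ℝ),
        ‖∫ ξ, ψ (N⁻¹ • ξ) * e2 (rdot x ξ + t * rsq ξ)‖
          ≤ C * ⨆ α : {α : Fin n → ℝ // ∀ i, |α i| ≤ 1 / 2},
              ‖∑' k : Fin n → ℤ,
                  ψ (N⁻¹ • (fun i => α.1 i + (k i : ℝ))) *
                    e2 (rdot (fun i => x i + 2 * t * α.1 i) (fun i => (k i : ℝ)) +
                      t * zsq k)‖ := by
  refine ⟨1, one_pos, ?_⟩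
  intro ψ hψ hsupp N hN x t
  have hNpos : (0:ℝ) < N := by linarith
  -- bound on ψ
  obtain ⟨M, hM⟩ : ∃ M, ∀ v, ‖ψ v‖ ≤ M := by
    have hCS : HasCompactSupport ψ := by
      apply HasCompactSupport.intro (isCompact_closedBall (0 : Fin n → ℝ) 1)
      intro v hv
      apply hsupp
      have hv1 : 1 < ‖v‖ := by
        simp only [Metric.mem_closedBall, dist_zero_right, not_le] at hv
        exact hv
      obtain ⟨i, hi⟩ : ∃ i, 1 < |v i| := by
        by_contra h
        push_neg at h
        have : ‖v‖ ≤ 1 := (pi_norm_le_iff_of_nonneg zero_le_one).2 fun i => by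
          simpa [Real.norm_eq_abs] using h i
        linarith
      have h1 : (v i)^2 ≤ rsq v :=
        Finset.single_le_sum (f := fun j => (v j)^2) (fun _ _ => sq_nonneg _) (Finset.mem_univ i)
      nlinarith [_root_.sq_abs (v i)]
    exact hCS.exists_bound_of_continuous hψ.continuous
  have hM0 : 0 ≤ M := le_trans (norm_nonneg _) (hM 0)
  -- sets
  set T := Fintype.piFinset fun _ : Fin n => Finset.Icc (-(⌈N⌉ + 1)) (⌈N⌉ + 1) with hT
  set Q : Set (Fin n → ℝ) := Set.univ.pi fun _ => Set.Ico (-(1/2) : ℝ) (1/2) with hQdef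
  have hQmeas : MeasurableSet Q := MeasurableSet.univ_pi fun _ => measurableSet_Ico
  have hQmem : ∀ α ∈ Q, ∀ i, |α i| ≤ 1/2 := by
    intro α hα i
    have h := (Set.mem_univ_pi.1 hα) i
    rw [Set.mem_Ico] at h
    rw [abs_le]
    constructor <;> linarith [h.1, h.2]
  have hQvol : volume Q = 1 := by
    rw [hQdef, volume_pi_pi]
    simp only [Real.volume_Ico]
    norm_num
  set B : (Fin n → ℤ) → Set (Fin n → ℝ) :=
    fun k => Set.univ.pi fun i => Set.Ico ((k i : ℝ) - 1/2) ((k i:ℝ) + 1/2) with hBdef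
  have hBmeas : ∀ k, MeasurableSet (B k) :=
    fun k => MeasurableSet.univ_pi fun _ => measurableSet_Ico
  have hBdisj : Pairwise (Function.onFun Disjoint B) := by
    intro k k' hkk'
    rw [Function.onFun, Set.disjoint_left]
    intro ξ h1 h2
    apply hkk'
    funext i
    have a1 := (Set.mem_univ_pi.1 h1) i
    have a2 := (Set.mem_univ_pi.1 h2) i
    rw [Set.mem_Ico] at a1 a2
    have e1 : ((k i : ℝ)) < (k' i : ℝ) + 1 := by linarith [a1.1, a1.2, a2.1, a2.2]
    have e2 : ((k' i : ℝ)) < (k i : ℝ) + 1 := by linarith [a1.1, a1.2, a2.1, a2.2]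
    have e1' : k i < k' i + 1 := by exact_mod_cast e1
    have e2' : k' i < k i + 1 := by exact_mod_cast e2
    omega
  have hBunion : (⋃ k, B k) = Set.univ := by
    ext ξ
    simp only [Set.mem_iUnion, Set.mem_univ, iff_true]
    refine ⟨fun i => ⌊ξ i + 1/2⌋, ?_⟩
    rw [Set.mem_univ_pi]
    intro i
    have h1 := Int.floor_le (ξ i + 1/2)
    have h2 := Int.lt_floor_add_one (ξ i + 1/2)
    rw [Set.mem_Ico]
    constructor <;> [skip; skip] <;> dsimp only <;> [linarith; linarith]
  -- the kernel
  set F : (Fin n → ℝ) → ℂ := fun ξ => ψ (N⁻¹ • ξ) * e2 (rdot x ξ + t * rsq ξ) with hFdef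
  have hrsq_cont : Continuous fun ξ : Fin n → ℝ => rsq ξ := by
    unfold rsq; exact continuous_finset_sum _ fun i _ => (continuous_apply i).pow 2
  have hrdot_cont : ∀ w : Fin n → ℝ, Continuous fun ξ : Fin n → ℝ => rdot w ξ := fun w => by
    unfold rdot
    exact continuous_finset_sum _ fun i _ => continuous_const.mul (continuous_apply i)
  have hFcont : Continuous F :=
    (hψ.continuous.comp (continuous_const_smul _)).mul
      (continuous_e2.comp ((hrdot_cont x).add (continuous_const.mul hrsq_cont)))
  have hFsupp : HasCompactSupport F := by
    apply HasCompactSupport.intro (isCompact_closedBall (0 : Fin n → ℝ) N)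
    intro v hv
    have hv1 : N < ‖v‖ := by
      simp only [Metric.mem_closedBall, dist_zero_right, not_le] at hv
      exact hv
    obtain ⟨i, hi⟩ : ∃ i, N < |v i| := by
      by_contra h
      push_neg at h
      have : ‖v‖ ≤ N := (pi_norm_le_iff_of_nonneg hNpos.le).2 fun i => by
        simpa [Real.norm_eq_abs] using h i
      linarith
    show ψ (N⁻¹ • v) * e2 (rdot x v + t * rsq v) = 0
    rw [psi_vanish hsupp hN hi, zero_mul]
  have hFint : Integrable F := hFcont.integrable_of_hasCompactSupport hFsupp
  -- decomposition
  have step1 : ∫ ξ, F ξ = ∑' k : Fin n → ℤ, ∫ ξ in B k, F ξ := by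
    rw [← setIntegral_univ, ← hBunion]
    exact integral_iUnion hBmeas hBdisj (hBunion ▸ hFint.integrableOn)
  have step2 : ∀ k : Fin n → ℤ, ∫ ξ in B k, F ξ = ∫ α in Q, F (α + fun i => (k i:ℝ)) := by
    intro k
    have hmp : MeasurePreserving (fun α : Fin n → ℝ => α + fun i => (k i:ℝ)) volume volume :=
      measurePreserving_add_right volume _
    have hemb : MeasurableEmbedding (fun α : Fin n → ℝ => α + fun i => (k i:ℝ)) :=
      (MeasurableEquiv.addRight (fun i => (k i:ℝ))).measurableEmbedding
    have hpre : (fun α : Fin n → ℝ => α + fun i => (k i:ℝ)) ⁻¹' (B k) = Q := by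
      ext α
      simp only [hBdef, hQdef, Set.mem_preimage, Set.mem_univ_pi, Pi.add_apply, Set.mem_Ico]
      constructor <;> intro h i <;> have hh := h i <;> constructor <;>
        [linarith [hh.1]; linarith [hh.2]; linarith [hh.1]; linarith [hh.2]]
    rw [← hpre, hmp.setIntegral_preimage_emb hemb]
  have step3 : ∀ (k : Fin n → ℤ) (α : Fin n → ℝ),
      F (α + fun i => (k i:ℝ)) = e2 (rdot x α + t * rsq α) * fterm ψ N t x k α := by
    intro k α
    show ψ (N⁻¹ • (α + fun i => (k i:ℝ))) *
        e2 (rdot x (α + fun i => (k i:ℝ)) + t * rsq (α + fun i => (k i:ℝ)))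
      = e2 (rdot x α + t * rsq α) * fterm ψ N t x k α
    have harg : (α + fun i => (k i:ℝ)) = fun i => α i + (k i:ℝ) := rfl
    rw [harg, key_exp x α t k, e2_add]
    unfold fterm
    ring
  -- swap sum and integral
  have hgcont : ∀ k : Fin n → ℤ,
      Continuous fun α : Fin n → ℝ => e2 (rdot x α + t * rsq α) * fterm ψ N t x k α := by
    intro k
    apply Continuous.mul
    · exact continuous_e2.comp ((hrdot_cont x).add (continuous_const.mul hrsq_cont))
    · unfold fterm
      apply Continuous.mul
      · apply hψ.continuous.comp
        apply Continuous.fun_const_smul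
        exact continuous_pi fun i => (continuous_apply i).add continuous_const
      · apply continuous_e2.comp
        apply Continuous.add
        · unfold rdot
          exact continuous_finset_sum _ fun i _ =>
            (continuous_const.add (continuous_const.mul (continuous_apply i))).mul
              continuous_const
        · exact continuous_const
  have hfin : ∑' k : Fin n → ℤ,
      ∫⁻ α in Q, (‖e2 (rdot x α + t * rsq α) * fterm ψ N t x k α‖₊ : ℝ≥0∞) ≠ ⊤ := by
    have hzero : ∀ k ∉ T,
        ∫⁻ α in Q, (‖e2 (rdot x α + t * rsq α) * fterm ψ N t x k α‖₊ : ℝ≥0∞) = 0 := by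
      intro k hk
      rw [setLIntegral_congr_fun hQmeas (fun α hα => ?_), lintegral_zero]
      rw [fterm_zero hsupp hN t x hk (hQmem α hα), mul_zero]
      simp
    rw [tsum_eq_sum (s := T) hzero]
    refine (ENNReal.sum_lt_top.2 fun k _ => ?_).ne
    calc ∫⁻ α in Q, (‖e2 (rdot x α + t * rsq α) * fterm ψ N t x k α‖₊ : ℝ≥0∞)
        ≤ ∫⁻ _α in Q, ENNReal.ofReal M := by
          apply lintegral_mono
          intro α
          dsimp only
          rw [← enorm_eq_nnnorm, ← ofReal_norm]
          apply ENNReal.ofReal_le_ofReal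
          rw [norm_mul, norm_e2, one_mul]
          exact norm_fterm_le hM N t x k α
    _ = ENNReal.ofReal M * volume Q := setLIntegral_const _ _
    _ < ⊤ := by rw [hQvol, mul_one]; exact ENNReal.ofReal_lt_top
  have step4 : ∑' k : Fin n → ℤ, ∫ α in Q, e2 (rdot x α + t * rsq α) * fterm ψ N t x k α
      = ∫ α in Q, ∑' k : Fin n → ℤ, e2 (rdot x α + t * rsq α) * fterm ψ N t x k α :=
    (integral_tsum (fun k => (hgcont k).aestronglyMeasurable.restrict) hfin).symm
  have step23 : ∀ k : Fin n → ℤ,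
      ∫ ξ in B k, F ξ = ∫ α in Q, e2 (rdot x α + t * rsq α) * fterm ψ N t x k α := by
    intro k
    rw [step2 k]
    exact integral_congr_ae (ae_of_all _ fun α => step3 k α)
  have main : ∫ ξ, F ξ
      = ∫ α in Q, e2 (rdot x α + t * rsq α) * ∑' k : Fin n → ℤ, fterm ψ N t x k α := by
    rw [step1, tsum_congr step23, step4]
    refine integral_congr_ae (ae_of_all _ fun α => ?_)
    exact tsum_mul_left
  have hbdd : BddAbove (Set.range fun β : {α : Fin n → ℝ // ∀ i, |α i| ≤ 1/2} =>
      ‖∑' k : Fin n → ℤ, fterm ψ N t x k β.1‖) := by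
    refine ⟨(T.card : ℝ) * M, ?_⟩
    rintro r ⟨β, rfl⟩
    exact wsum_bound hsupp hN t x hM β.2
  have hsup : ∀ α ∈ Q, ‖∑' k : Fin n → ℤ, fterm ψ N t x k α‖ ≤
      ⨆ β : {α : Fin n → ℝ // ∀ i, |α i| ≤ 1/2},
        ‖∑' k : Fin n → ℤ, fterm ψ N t x k β.1‖ :=
    fun α hα =>
      le_ciSup (f := fun β : {α : Fin n → ℝ // ∀ i, |α i| ≤ 1/2} =>
        ‖∑' k : Fin n → ℤ, fterm ψ N t x k β.1‖) hbdd ⟨α, hQmem α hα⟩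
  have final : ‖∫ α in Q, e2 (rdot x α + t * rsq α) * ∑' k : Fin n → ℤ, fterm ψ N t x k α‖ ≤
      (⨆ β : {α : Fin n → ℝ // ∀ i, |α i| ≤ 1/2},
        ‖∑' k : Fin n → ℤ, fterm ψ N t x k β.1‖) * (volume Q).toReal := by
    apply norm_setIntegral_le_of_norm_le_const (by rw [hQvol]; exact ENNReal.one_lt_top)
    intro α hα
    rw [norm_mul, norm_e2, one_mul]
    exact hsup α hα
  show ‖∫ ξ, F ξ‖ ≤ 1 * ⨆ β : {α : Fin n → ℝ // ∀ i, |α i| ≤ 1/2},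
      ‖∑' k : Fin n → ℤ, fterm ψ N t x k β.1‖
  rw [one_mul, main]
  calc ‖∫ α in Q, e2 (rdot x α + t * rsq α) * ∑' k : Fin n → ℤ, fterm ψ N t x k α‖
      ≤ (⨆ β : {α : Fin n → ℝ // ∀ i, |α i| ≤ 1/2},
          ‖∑' k : Fin n → ℤ, fterm ψ N t x k β.1‖) * (volume Q).toReal := final
  _ = _ := by rw [hQvol]; simp
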